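/- Let π : ℝⁿ → ℝⁿ/ℤⁿ be the canonical projection and let L⁺ = {q₀ + t v₀ : t ≥ 0} be a ray with v₀ ≠ 0. Then the closure of π(L⁺) in the torus ℝⁿ/ℤⁿ equals the closure of π(L⁻) where L⁻ = {q₀ + t v₀ : t ≤ 0}, and this common closure is a coset x₀ + H of a closed subgroup H of ℝⁿ/ℤⁿ. -/
import Mathlib


/-- The integer lattice ℤⁿ as an additive subgroup of ℝⁿ. -/
def intSubgroup (n : ℕ) : AddSubgroup (Fin n → ℝ) :=
  AddSubgroup.pi Set.univ fun _ => AddSubgroup.zmultiples (1 : ℝ)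

/-- The n-dimensional torus ℝⁿ/ℤⁿ. -/
abbrev Torus (n : ℕ) := (Fin n → ℝ) ⧸ intSubgroup n

open Set

instance torusCompact (n : ℕ) : CompactSpace (Torus n) := by
  constructor
  have h1 : IsCompact (Set.pi Set.univ fun _ : Fin n => Set.Icc (0:ℝ) 1) :=
    isCompact_univ_pi fun _ => isCompact_Icc
  have h2 : (Set.univ : Set (Torus n)) =
      (QuotientAddGroup.mk : (Fin n → ℝ) → Torus n) ''
        (Set.pi Set.univ fun _ => Set.Icc (0:ℝ) 1) := by
    refine Set.eq_univ_iff_forall.2 ?_ |>.symm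
    intro x
    obtain ⟨q, rfl⟩ := QuotientAddGroup.mk_surjective x
    refine ⟨fun i => Int.fract (q i), fun i _ => ⟨Int.fract_nonneg _, (Int.fract_lt_one _).le⟩, ?_⟩
    refine QuotientAddGroup.eq_iff_sub_mem.2 ?_
    intro i _
    refine ⟨-⌊q i⌋, ?_⟩
    show (-⌊q i⌋ : ℤ) • (1:ℝ) = Int.fract (q i) - q i
    rw [zsmul_eq_mul, Int.fract]
    push_cast
    ring
  rw [h2]
  exact h1.image continuous_quot_mk

/-- The closures of the projections of the two opposite rays into the torus ℝⁿ/ℤⁿ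
coincide, and the common closure is a coset x₀ + H of a closed subgroup H. -/
theorem stmt_1 (n : ℕ) (q₀ v₀ : Fin n → ℝ) (hv : v₀ ≠ 0) :
    closure ((QuotientAddGroup.mk : (Fin n → ℝ) → Torus n) ''
        {q | ∃ t : ℝ, 0 ≤ t ∧ q = q₀ + t • v₀})
      = closure ((QuotientAddGroup.mk : (Fin n → ℝ) → Torus n) ''
        {q | ∃ t : ℝ, t ≤ 0 ∧ q = q₀ + t • v₀}) ∧
    ∃ (x₀ : Torus n) (H : AddSubgroup (Torus n)), IsClosed (H : Set (Torus n)) ∧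
      closure ((QuotientAddGroup.mk : (Fin n → ℝ) → Torus n) ''
        {q | ∃ t : ℝ, 0 ≤ t ∧ q = q₀ + t • v₀})
        = (fun h => x₀ + h) '' (H : Set (Torus n)) := by
  set π : (Fin n → ℝ) → Torus n := QuotientAddGroup.mk with hπ
  have hπadd : ∀ a b : Fin n → ℝ, π (a + b) = π a + π b := fun a b => rfl
  have hπneg : ∀ a : Fin n → ℝ, π (-a) = -π a := fun a => rfl
  have hπ0 : π 0 = 0 := rfl
  set B : Set (Torus n) := π '' {q | ∃ t : ℝ, 0 ≤ t ∧ q = t • v₀} with hB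
  -- translation identities
  have hsetP : π '' {q | ∃ t : ℝ, 0 ≤ t ∧ q = q₀ + t • v₀} = (fun y => π q₀ + y) '' B := by
    ext x
    constructor
    · rintro ⟨q, ⟨t, ht, rfl⟩, rfl⟩
      exact ⟨π (t • v₀), ⟨t • v₀, ⟨t, ht, rfl⟩, rfl⟩, (hπadd _ _).symm⟩
    · rintro ⟨y, ⟨q, ⟨t, ht, rfl⟩, rfl⟩, rfl⟩
      exact ⟨q₀ + t • v₀, ⟨t, ht, rfl⟩, hπadd _ _⟩
  have hsetN : π '' {q | ∃ t : ℝ, t ≤ 0 ∧ q = q₀ + t • v₀} = (fun y => π q₀ + y) '' (-B) := by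
    ext x
    constructor
    · rintro ⟨q, ⟨t, ht, rfl⟩, rfl⟩
      refine ⟨π (t • v₀), ?_, (hπadd _ _).symm⟩
      refine Set.mem_neg.2 ⟨(-t) • v₀, ⟨-t, neg_nonneg.2 ht, rfl⟩, ?_⟩
      rw [show (-t) • v₀ = -(t • v₀) by rw [neg_smul], hπneg]
    · rintro ⟨y, hy, rfl⟩
      obtain ⟨q, ⟨t, ht, rfl⟩, hq⟩ := Set.mem_neg.1 hy
      refine ⟨q₀ + (-t) • v₀, ⟨-t, neg_nonpos.2 ht, rfl⟩, ?_⟩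
      rw [hπadd]
      congr 1
      rw [← neg_eq_iff_eq_neg] at hq
      rw [← hq, show (-t) • v₀ = -(t • v₀) by rw [neg_smul], hπneg]
  -- B is an additive submonoid
  have hMB : ∃ M : AddSubmonoid (Torus n), (M : Set (Torus n)) = B := by
    refine ⟨⟨⟨B, ?_⟩, ?_⟩, rfl⟩
    · rintro a b ⟨q, ⟨s, hs, rfl⟩, rfl⟩ ⟨r, ⟨t, ht, rfl⟩, rfl⟩
      refine ⟨(s + t) • v₀, ⟨s + t, add_nonneg hs ht, rfl⟩, ?_⟩
      rw [add_smul, hπadd]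
    · exact ⟨(0:ℝ) • v₀, ⟨0, le_refl _, rfl⟩, by rw [zero_smul, hπ0]⟩
  obtain ⟨M, hM⟩ := hMB
  -- closure of B is a closed subgroup
  have key : closure B = ((AddSubgroup.closure B).topologicalClosure : Set (Torus n)) := by
    rw [AddSubgroup.topologicalClosure_coe,
      ← closure_addSubmonoidClosure_eq_closure_addSubgroupClosure, ← hM,
      AddSubmonoid.closure_eq]
  set H : AddSubgroup (Torus n) := (AddSubgroup.closure B).topologicalClosure with hH
  have hclosed : IsClosed (H : Set (Torus n)) := AddSubgroup.isClosed_topologicalClosure _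
  have hnegH : -(H : Set (Torus n)) = (H : Set (Torus n)) := by
    ext x; simp [Set.mem_neg, neg_mem_iff]
  have htrans : ∀ s : Set (Torus n),
      closure ((fun y => π q₀ + y) '' s) = (fun y => π q₀ + y) '' closure s := fun s =>
    ((Homeomorph.addLeft (π q₀)).image_closure s).symm
  have hcn : closure (-B) = -closure B := (neg_closure B).symm
  constructor
  · rw [hsetP, hsetN, htrans, htrans, hcn, key, hnegH]
  · exact ⟨π q₀, H, hclosed, by rw [hsetP, htrans, key]⟩
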